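/- Let A_t be the matrix formed by vertically stacking A(S_{t,1}),...,A(S_{t,N}), and let Ã_{t-1} be formed by stacking A(S_{u,n}) for all u < t and all n, where each S_{u,n} ⊆ {1,...,M} has |S_{u,n}| > M/2. If ⋃_n S_{t,n} ⊆ ⋃_{u<t}⋃_n S_{u,n}, then the row space of A_t is contained in the row space of Ã_{t-1}. -/

import Mathlib

/-- The row of the centered selection matrix A(S) = B(S)F(S) corresponding to the
selected index a ∈ S: its j-th entry is [j = a] - (1/|S|)[j ∈ S]. -/
noncomputable def rowA (M : ℕ) (S : Finset (Fin M)) (a : Fin M) : Fin M → ℝ :=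
  fun j => (if j = a then (1 : ℝ) else 0) - (if j ∈ S then ((S.card : ℝ))⁻¹ else 0)

/-- The set of rows of A(S). -/
def rowsOf (M : ℕ) (S : Finset (Fin M)) : Set (Fin M → ℝ) :=
  {v | ∃ a ∈ S, v = rowA M S a}

/-- Difference of basis vectors e_a - e_b. -/
noncomputable def dvec (M : ℕ) (a b : Fin M) : Fin M → ℝ :=
  fun j => (if j = a then (1 : ℝ) else 0) - (if j = b then (1 : ℝ) else 0)

lemma dvec_mem (M : ℕ) (S : Finset (Fin M)) {a b : Fin M} (ha : a ∈ S) (hb : b ∈ S) :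
    dvec M a b ∈ Submodule.span ℝ (rowsOf M S) := by
  have h : dvec M a b = rowA M S a - rowA M S b := by
    funext j
    simp only [dvec, rowA, Pi.sub_apply]
    ring
  rw [h]
  exact Submodule.sub_mem _ (Submodule.subset_span ⟨a, ha, rfl⟩)
    (Submodule.subset_span ⟨b, hb, rfl⟩)

lemma rowA_eq_sum (M : ℕ) (S : Finset (Fin M)) (hS : S.Nonempty) (a : Fin M) :
    rowA M S a = ((S.card : ℝ))⁻¹ • ∑ j ∈ S, dvec M a j := by
  have hc : (S.card : ℝ) ≠ 0 := by
    exact Nat.cast_ne_zero.mpr (Finset.card_pos.mpr hS).ne'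
  funext x
  simp only [Pi.smul_apply, Finset.sum_apply, dvec, rowA, smul_eq_mul,
    Finset.sum_sub_distrib, Finset.sum_const, nsmul_eq_mul, mul_one]
  have hsum : (∑ j ∈ S, if x = j then (1 : ℝ) else 0)
      = if x ∈ S then (1 : ℝ) else 0 := Finset.sum_ite_eq S x (fun _ => (1 : ℝ))
  rw [hsum]
  by_cases hx : x = a
  · subst hx
    by_cases hxS : x ∈ S <;> simp [hxS] <;> field_simp
  · by_cases hxS : x ∈ S <;> simp [hx, hxS] <;> field_simp

theorem stmt11 (M N t : ℕ) (hM : 1 ≤ M)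
    (St : Fin N → Finset (Fin M)) (Sp : Fin t → Fin N → Finset (Fin M))
    (hSt : ∀ n, (M : ℝ) / 2 < (St n).card)
    (hSp : ∀ u n, (M : ℝ) / 2 < (Sp u n).card)
    (hsub : Finset.univ.biUnion St ⊆
      Finset.univ.biUnion (fun u => Finset.univ.biUnion (Sp u))) :
    Submodule.span ℝ (⋃ n, rowsOf M (St n)) ≤
      Submodule.span ℝ (⋃ u, ⋃ n, rowsOf M (Sp u n)) := by
  -- membership of dvec in the target span
  have key : ∀ a b : Fin M, a ∈ Finset.univ.biUnion St → b ∈ Finset.univ.biUnion St →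
      dvec M a b ∈ Submodule.span ℝ (⋃ u, ⋃ n, rowsOf M (Sp u n)) := by
    intro a b ha hb
    obtain ⟨u1, -, hu1⟩ := Finset.mem_biUnion.mp (hsub ha)
    obtain ⟨n1, -, hn1⟩ := Finset.mem_biUnion.mp hu1
    obtain ⟨u2, -, hu2⟩ := Finset.mem_biUnion.mp (hsub hb)
    obtain ⟨n2, -, hn2⟩ := Finset.mem_biUnion.mp hu2
    -- the two sets intersect
    have hcard : M < (Sp u1 n1).card + (Sp u2 n2).card := by
      have := add_lt_add (hSp u1 n1) (hSp u2 n2)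
      rw [← add_div] at this
      have : (M : ℝ) < ((Sp u1 n1).card + (Sp u2 n2).card : ℕ) := by
        push_cast
        linarith
      exact_mod_cast this
    have hinter : (Sp u1 n1 ∩ Sp u2 n2).Nonempty := by
      rw [← Finset.card_pos]
      have h1 : (Sp u1 n1 ∪ Sp u2 n2).card ≤ M := by
        simpa using Finset.card_le_card (Finset.subset_univ (Sp u1 n1 ∪ Sp u2 n2))
      have h2 := Finset.card_inter_add_card_union (Sp u1 n1) (Sp u2 n2)
      omega
    obtain ⟨k, hk⟩ := hinter
    have hk1 : k ∈ Sp u1 n1 := (Finset.mem_inter.mp hk).1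
    have hk2 : k ∈ Sp u2 n2 := (Finset.mem_inter.mp hk).2
    have hsplit : dvec M a b = dvec M a k + dvec M k b := by
      funext j; simp only [dvec, Pi.add_apply]; ring
    rw [hsplit]
    have m1 : dvec M a k ∈ Submodule.span ℝ (⋃ u, ⋃ n, rowsOf M (Sp u n)) :=
      Submodule.span_mono (by
        intro v hv
        exact Set.mem_iUnion.mpr ⟨u1, Set.mem_iUnion.mpr ⟨n1, hv⟩⟩)
        (dvec_mem M (Sp u1 n1) hn1 hk1)
    have m2 : dvec M k b ∈ Submodule.span ℝ (⋃ u, ⋃ n, rowsOf M (Sp u n)) :=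
      Submodule.span_mono (by
        intro v hv
        exact Set.mem_iUnion.mpr ⟨u2, Set.mem_iUnion.mpr ⟨n2, hv⟩⟩)
        (dvec_mem M (Sp u2 n2) hk2 hn2)
    exact Submodule.add_mem _ m1 m2
  rw [Submodule.span_le]
  intro v hv
  obtain ⟨n, hvn⟩ := Set.mem_iUnion.mp hv
  obtain ⟨a, ha, rfl⟩ := hvn
  have hne : (St n).Nonempty := by
    rw [← Finset.card_pos]
    rcases Nat.eq_zero_or_pos (St n).card with h0 | h
    · exfalso
      have h1 := hSt n
      rw [h0] at h1
      have hM' : (1 : ℝ) ≤ (M : ℝ) := by exact_mod_cast hM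
      norm_num at h1
      linarith
    · exact h
  rw [rowA_eq_sum M (St n) hne a]
  refine Submodule.smul_mem _ _ (Submodule.sum_mem _ (fun j hj => ?_))
  exact key a j (Finset.mem_biUnion.mpr ⟨n, Finset.mem_univ n, ha⟩)
    (Finset.mem_biUnion.mpr ⟨n, Finset.mem_univ n, hj⟩)
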